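/- Let e ≥ 2 and 0 < a < b ≤ c ≤ e, and let B be the block of e-weight 4 with notation ⟨4^a, 6^{b−a}, 5^{c−b}, 4^{e−c}⟩, which forms a [4:2]-pair via the residue j carried by runner a. The partitions lying in B that are exceptional for this pair are exactly: ⟨a_{(2,1,1)}⟩; ⟨a_{(1,1,1)}, i_{(1)}⟩ for 0 ≤ i ≤ e−1 with i ∉ {a−1, a}; and ⟨a_{(1,1,1,1)}⟩. -/

import Mathlib

/-- A partition: a weakly decreasing function `parts : ℕ → ℕ` (0-indexed),
having exactly `len` nonzero parts. -/
structure AbacusPartition where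
  parts : ℕ → ℕ
  antitone : Antitone parts
  len : ℕ
  pos_of_lt : ∀ i, i < len → 0 < parts i
  zero_of_ge : ∀ i, len ≤ i → parts i = 0

/-- The beta-set (abacus display) of a partition with `r` beads:
positions `λ_i + r - i` for `1 ≤ i ≤ r` (0-indexed: `parts i + (r - 1 - i)`). -/
def AbacusPartition.betaSet (lam : AbacusPartition) (r : ℕ) : Finset ℕ :=
  (Finset.range r).image (fun i => lam.parts i + (r - 1 - i))

/-- e-weight of the bead at position `p` of the display `B`: the number of
unoccupied positions `q < p` with `q ≡ p (mod e)`. -/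
def beadWeight (e : ℕ) (B : Finset ℕ) (p : ℕ) : ℕ :=
  ((Finset.range p).filter (fun q => q % e = p % e ∧ q ∉ B)).card

/-- Total e-weight of the display `B`. -/
def abacusWeight (e : ℕ) (B : Finset ℕ) : ℕ :=
  B.sum (fun p => beadWeight e B p)

/-- e-weight of a partition (computed from the display with `lam.len` beads). -/
def eWeight (e : ℕ) (lam : AbacusPartition) : ℕ :=
  abacusWeight e (lam.betaSet lam.len)

/-- Positions on runner `res` (positions `p` with `p % e = res`), in increasing
order, up to a bound strictly beyond every bead. -/
def posList (e : ℕ) (B : Finset ℕ) (res : ℕ) : List ℕ :=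
  (List.range (B.sup id + e + 2)).filter (fun p => p % e == res)

/-- One step of the signature-reduction automaton; the state is
`(list of surviving '+' positions, stack of pending '−' positions)`.
A '−' occurs at `p` when `p` is occupied and its preceding position unoccupied
(position `-1` counts as occupied); a '+' occurs at `p` when `p` is unoccupied
and its preceding position occupied.  A '+' cancels the most recent pending '−'. -/
def signStep (B : Finset ℕ) (st : List ℕ × List ℕ) (p : ℕ) : List ℕ × List ℕ :=
  if p ∈ B ∧ ¬(p = 0 ∨ p - 1 ∈ B) then (st.1, p :: st.2)
  else if p ∉ B ∧ (p = 0 ∨ p - 1 ∈ B) then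
    (match st.2 with
     | [] => (p :: st.1, ([] : List ℕ))
     | _ :: tl => (st.1, tl))
  else st

/-- Final state of the reduction of the `j`-signature on runner `res`:
`(surviving '+' (conormal) positions, surviving '−' (normal) positions)`,
each list in decreasing order of position. -/
def signState (e : ℕ) (B : Finset ℕ) (res : ℕ) : List ℕ × List ℕ :=
  (posList e B res).foldl (signStep B) ([], [])

/-- Positions of the normal beads on runner `res`, in decreasing order. -/
def normalList (e : ℕ) (B : Finset ℕ) (res : ℕ) : List ℕ := (signState e B res).2

/-- The conormal positions on runner `res`, in decreasing order. -/
def conormalList (e : ℕ) (B : Finset ℕ) (res : ℕ) : List ℕ := (signState e B res).1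

/-- ε: the number of normal beads on runner `res`. -/
def epsB (e : ℕ) (B : Finset ℕ) (res : ℕ) : ℕ := (normalList e B res).length

/-- φ: the number of conormal positions on runner `res`. -/
def phiB (e : ℕ) (B : Finset ℕ) (res : ℕ) : ℕ := (conormalList e B res).length

/-- ε_j of a partition: in the display with `lam.len` beads, residue `j`
is carried by runner `(j + lam.len) % e`. -/
def epsP (e : ℕ) (lam : AbacusPartition) (j : ℕ) : ℕ :=
  epsB e (lam.betaSet lam.len) ((j + lam.len) % e)

/-- φ_j of a partition. -/
def phiP (e : ℕ) (lam : AbacusPartition) (j : ℕ) : ℕ :=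
  phiB e (lam.betaSet lam.len) ((j + lam.len) % e)

/-- Move each bead in `ps` from its position `p` to `p - 1`. -/
def moveDown (B : Finset ℕ) (ps : List ℕ) : Finset ℕ :=
  ps.foldl (fun C p => insert (p - 1) (C.erase p)) B

/-- For each position `p` in `ps`, move the bead at `p - 1` to `p`. -/
def moveUp (B : Finset ℕ) (ps : List ℕ) : Finset ℕ :=
  ps.foldl (fun C p => insert p (C.erase (p - 1))) B

/-- Ẽ^t on displays: move the `t` normal beads at the smallest positions down. -/
def Etil (e : ℕ) (B : Finset ℕ) (res t : ℕ) : Finset ℕ :=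
  moveDown B ((normalList e B res).reverse.take t)

/-- F̃^t on displays: for the `t` largest conormal positions `p`,
move the bead at `p - 1` to `p`. -/
def Ftil (e : ℕ) (B : Finset ℕ) (res t : ℕ) : Finset ℕ :=
  moveUp B ((conormalList e B res).take t)

/-- Number of beads of `B` on runner `i`. -/
def runnerCount (e : ℕ) (B : Finset ℕ) (i : ℕ) : ℕ :=
  (B.filter (fun p => p % e = i)).card

/-- Sum of the e-weights of the beads of `B` on runner `i` (this is `|λ(i)|`). -/
def runnerWeight (e : ℕ) (B : Finset ℕ) (i : ℕ) : ℕ :=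
  (B.filter (fun p => p % e = i)).sum (beadWeight e B)

/-- The display of the e-core: slide every bead as far up its runner as possible. -/
def coreBeta (e : ℕ) (B : Finset ℕ) : Finset ℕ :=
  (Finset.range e).biUnion
    (fun i => (Finset.range (runnerCount e B i)).image (fun m => i + m * e))

/-- `lam` lies in the block with bead counts `bd 0, …, bd (e-1)` and e-weight `w`:
displayed with `r = bd 0 + ⋯ + bd (e-1)` beads it has `bd i` beads on runner `i`
and e-weight `w`. -/
def inBlock (e : ℕ) (bd : ℕ → ℕ) (w : ℕ) (lam : AbacusPartition) : Prop :=
  lam.len ≤ (Finset.range e).sum bd ∧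
  (∀ i < e, runnerCount e (lam.betaSet ((Finset.range e).sum bd)) i = bd i) ∧
  abacusWeight e (lam.betaSet ((Finset.range e).sum bd)) = w

/-- The single-runner beta-set of the partition with parts `ρ` and `c` beads. -/
def oneRunnerBeta (rho : List ℕ) (c : ℕ) : Finset ℕ :=
  (Finset.range c).image (fun t => rho.getD t 0 + (c - 1 - t))

/-- The display of the partition `⟨0_{lamOf 0}, …, (e−1)_{lamOf (e−1)} | bd 0, …, bd (e−1)⟩`. -/
def display (e : ℕ) (bd : ℕ → ℕ) (lamOf : ℕ → List ℕ) : Finset ℕ :=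
  (Finset.range e).biUnion
    (fun i => (oneRunnerBeta (lamOf i) (bd i)).image (fun m => i + m * e))

/-- The operator Ḟ at runner `res`: apply F̃^{φ} (valid when ε = 0 < φ). -/
def dotF (e : ℕ) (B : Finset ℕ) (res : ℕ) : Finset ℕ := Ftil e B res (phiB e B res)

/-- Apply a chain of Ḟ steps. -/
def chainFold (e : ℕ) : Finset ℕ → List ℕ → Finset ℕ
  | B, [] => B
  | B, i :: rest => chainFold e (dotF e B i) rest

/-- The chain of Ḟ steps is semisimple: at each step ε = 0 before, φ > 0 before,
and φ = 0 afterwards. -/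
def validChain (e : ℕ) : Finset ℕ → List ℕ → Prop
  | _, [] => True
  | B, i :: rest =>
      (epsB e B i = 0 ∧ 0 < phiB e B i ∧ phiB e (dotF e B i) i = 0) ∧
      validChain e (dotF e B i) rest

/-- `B` induces semisimply to `C` (displays with the same number of beads). -/
def InducesSS (e : ℕ) (B C : Finset ℕ) : Prop :=
  ∃ L : List ℕ, validChain e B L ∧ chainFold e B L = C

/-- Re-display a beta-set with `s` additional beads. -/
def shiftBeta (B : Finset ℕ) (s : ℕ) : Finset ℕ :=
  B.image (· + s) ∪ Finset.range s

/-- `B` induces semisimply to the partition displayed by `C` (where `C` may use a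
different number of beads). -/
def InducesToPartition (e : ℕ) (B C : Finset ℕ) : Prop :=
  ∃ D : Finset ℕ, InducesSS e B D ∧ shiftBeta D C.card = shiftBeta C D.card

/-- The block with bead counts `bd` and weight `w` is Rouquier:
for all `i < j < e`, `bd i − bd j ≥ w` or `bd j − bd i ≥ w − 1`. -/
def IsRouquier (e w : ℕ) (bd : ℕ → ℕ) : Prop :=
  ∀ i j, i < j → j < e → bd j + w ≤ bd i ∨ bd i + (w - 1) ≤ bd j

/-- `lam` is e-singular: it has `e` consecutive equal nonzero parts. -/
def ESingular (e : ℕ) (lam : AbacusPartition) : Prop :=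
  ∃ i, lam.parts i ≠ 0 ∧ ∀ m < e, lam.parts (i + m) = lam.parts i

/-- `lam` is e-regular. -/
def ERegular (e : ℕ) (lam : AbacusPartition) : Prop := ¬ ESingular e lam

/-- The induced e-sequence of the display `B`, as a multiset: each bead of
positive weight `w` at position `p` contributes `p, p−e, …, p−(w−1)e`. -/
def inducedSeq (e : ℕ) (B : Finset ℕ) : Multiset ℕ :=
  B.val.bind (fun p => (Multiset.range (beadWeight e B p)).map (fun m => p - m * e))

/-- The product order: `lam ≤_P mu` iff they have the same e-core and e-weight and
`s(mu)_r ≥ s(lam)_r` componentwise for all sufficiently large `r`. -/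
def ProdLE (e : ℕ) (lam mu : AbacusPartition) : Prop :=
  (∃ r, lam.len ≤ r ∧ mu.len ≤ r ∧
    coreBeta e (lam.betaSet r) = coreBeta e (mu.betaSet r)) ∧
  eWeight e lam = eWeight e mu ∧
  ∃ r0, ∀ r, r0 ≤ r →
    List.Forall₂ (· ≤ ·) ((inducedSeq e (lam.betaSet r)).sort (· ≤ ·))
      ((inducedSeq e (mu.betaSet r)).sort (· ≤ ·))

-- AUX SECTION
namespace St10

lemma filter_range_mod (e a : ℕ) (he : 0 < e) (K : ℕ) :
    ∃ N, (List.range K).filter (fun p => p % e == a) =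
      (List.range N).map (fun m => a + m * e) := by
  induction K with
  | zero => exact ⟨0, by simp⟩
  | succ K ih =>
    obtain ⟨N, hN⟩ := ih
    rw [List.range_succ, List.filter_append]
    by_cases h : K % e = a
    · refine ⟨N + 1, ?_⟩
      rw [List.range_succ, List.map_append, hN]
      have hfk : List.filter (fun p => p % e == a) [K] = [K] := by
        simp [List.filter_cons, h]
      rw [hfk]
      have hKN : K = a + N * e := by
        have hmem : ∀ m, (a + m * e ∈ (List.range K).filter (fun p => p % e == a))
            ↔ m < N := by
          intro m
          rw [hN]
          constructor
          · rintro hm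
            obtain ⟨m', hm', he'⟩ := List.mem_map.1 hm
            have : m' = m := by
              have := Nat.eq_of_mul_eq_mul_right he (by omega : m' * e = m * e)
              omega
            exact this ▸ List.mem_range.1 hm'
          · intro hm
            exact List.mem_map.2 ⟨m, List.mem_range.2 hm, rfl⟩
        have ha : a < e := by
          have := Nat.mod_lt K he
          omega
        have hmem2 : ∀ m, (a + m * e < K) ↔ m < N := by
          intro m
          rw [← hmem m, List.mem_filter, List.mem_range]
          have hmod : (a + m * e) % e = a := by
            simp [Nat.add_mul_mod_self_right, Nat.mod_eq_of_lt ha]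
          simp [hmod]
        have hdm := Nat.div_add_mod K e
        have hc : e * (K / e) = (K / e) * e := mul_comm _ _
        have h1 : ¬ (a + (K/e) * e < K) := by omega
        have h2 : ∀ m, m < K/e → a + m * e < K := by
          intro m hm
          have : m * e + e ≤ (K/e) * e := by
            calc m * e + e = (m+1) * e := by ring
            _ ≤ (K/e) * e := Nat.mul_le_mul_right e hm
          omega
        have : N = K / e := by
          rcases Nat.lt_trichotomy N (K/e) with hl | hl | hl
          · exact absurd ((hmem2 _).1 (h2 N hl)) (lt_irrefl N)
          · exact hl
          · exact absurd ((hmem2 _).2 hl) h1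
        subst this
        omega
      simp [← hKN]
    · refine ⟨N, ?_⟩
      have hfk : List.filter (fun p => p % e == a) [K] = [] := by
        simp [List.filter_cons, h]
      rw [hfk, List.append_nil, hN]


/-- Rows occupied on runner `i`. -/
def rows (e : ℕ) (B : Finset ℕ) (i : ℕ) : Finset ℕ :=
  (B.filter (fun p => p % e = i)).image (fun p => p / e)

lemma mem_rows {e i : ℕ} (B : Finset ℕ) (hi : i < e) (m : ℕ) :
    m ∈ rows e B i ↔ i + m * e ∈ B := by
  unfold rows
  simp only [Finset.mem_image, Finset.mem_filter]
  constructor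
  · rintro ⟨p, ⟨hpB, hpe⟩, rfl⟩
    have h1 := Nat.div_add_mod p e
    have h2 : p / e * e = e * (p / e) := Nat.mul_comm _ _
    have : i + p / e * e = p := by omega
    rwa [this]
  · intro hm
    refine ⟨i + m * e, ⟨hm, ?_⟩, ?_⟩
    · simp [Nat.add_mul_mod_self_right, Nat.mod_eq_of_lt hi]
    · rw [Nat.add_mul_div_right _ _ (by omega : 0 < e), Nat.div_eq_of_lt hi, Nat.zero_add]

/-- row-level defect: number of gaps below row m. -/
def rdef (S : Finset ℕ) (m : ℕ) : ℕ := ((Finset.range m).filter (fun q => q ∉ S)).card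

def rwt (S : Finset ℕ) : ℕ := S.sum (rdef S)

/-- numeric signature automaton -/
def nstep (st : ℕ × ℕ) (x : Bool × Bool) : ℕ × ℕ :=
  if x.1 ∧ ¬x.2 then (st.1, st.2 + 1)
  else if ¬x.1 ∧ x.2 then
    (match st.2 with
     | 0 => (st.1 + 1, 0)
     | k + 1 => (st.1, k))
  else st

def epsVal (S1 S2 : Finset ℕ) (N : ℕ) : ℕ :=
  (((List.range N).map (fun m => (decide (m ∈ S2), decide (m ∈ S1)))).foldl nstep (0, 0)).2

def phiVal (S1 S2 : Finset ℕ) (N : ℕ) : ℕ :=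
  (((List.range N).map (fun m => (decide (m ∈ S2), decide (m ∈ S1)))).foldl nstep (0, 0)).1

end St10

namespace St10

def flagOf (B : Finset ℕ) (p : ℕ) : Bool × Bool :=
  (decide (p ∈ B), decide (p = 0 ∨ p - 1 ∈ B))

lemma sim (B : Finset ℕ) : ∀ (ps : List ℕ) (st : List ℕ × List ℕ),
    (((ps.foldl (signStep B) st).1.length, (ps.foldl (signStep B) st).2.length) : ℕ × ℕ)
      = (ps.map (flagOf B)).foldl nstep (st.1.length, st.2.length) := by
  intro ps
  induction ps with
  | nil => intro st; rfl
  | cons p ps ih =>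
    intro st
    rw [List.foldl_cons, List.map_cons, List.foldl_cons, ih]
    congr 1
    unfold signStep nstep flagOf
    by_cases h1 : p ∈ B <;> by_cases h2 : p = 0 ∨ p - 1 ∈ B <;>
      simp only [h1, h2] <;>
      first
        | rfl
        | (cases hst : st.2 <;> simp [hst])
        | simp

lemma epsB_eq (e a : ℕ) (B : Finset ℕ) (ha : 0 < a) (hae : a < e) :
    ∃ N, epsB e B a = epsVal (rows e B (a-1)) (rows e B a) N ∧
      (∀ m, m ∈ rows e B (a-1) → m < N) ∧ (∀ m, m ∈ rows e B a → m < N) := by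
  have he : 0 < e := by omega
  obtain ⟨N, hN⟩ := filter_range_mod e a he (B.sup id + e + 2)
  refine ⟨N, ?_, ?_, ?_⟩
  · unfold epsB normalList signState posList
    rw [hN]
    have hsim := sim B ((List.range N).map (fun m => a + m * e)) ([], [])
    have h2 : (((List.range N).map (fun m => a + m * e)).foldl (signStep B) ([], [])).2.length
        = ((((List.range N).map (fun m => a + m * e)).map (flagOf B)).foldl nstep (0, 0)).2 := by
      have := congrArg Prod.snd hsim
      simpa using this
    rw [h2]
    unfold epsVal
    congr 2
    rw [List.map_map]
    apply List.map_congr_left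
    intro m _
    unfold flagOf
    simp only [Function.comp_apply]
    congr 1
    · congr 1
      rw [eq_iff_iff, ← mem_rows B hae m]
    · congr 1
      rw [eq_iff_iff]
      have hne : ¬ (a + m * e = 0) := by omega
      have hsub : a + m * e - 1 = (a - 1) + m * e := by omega
      rw [hsub]
      constructor
      · rintro (h | h)
        · omega
        · exact (mem_rows B (by omega) m).2 h
      · intro h
        exact Or.inr ((mem_rows B (by omega) m).1 h)
  · intro m hm
    have hmB := (mem_rows B (by omega : a - 1 < e) m).1 hm
    have hle : (a-1) + m * e ≤ B.sup id := Finset.le_sup (f := id) hmB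
    have hlt : a + m * e < B.sup id + e + 2 := by omega
    have hmem : a + m * e ∈ (List.range (B.sup id + e + 2)).filter (fun p => p % e == a) := by
      rw [List.mem_filter, List.mem_range]
      refine ⟨hlt, ?_⟩
      simp [Nat.add_mul_mod_self_right, Nat.mod_eq_of_lt hae]
    rw [hN] at hmem
    obtain ⟨m', hm', heq⟩ := List.mem_map.1 hmem
    have : m' = m := by
      have := Nat.eq_of_mul_eq_mul_right he (by omega : m' * e = m * e)
      omega
    exact this ▸ List.mem_range.1 hm'
  · intro m hm
    have hmB := (mem_rows B hae m).1 hm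
    have hle : a + m * e ≤ B.sup id := Finset.le_sup (f := id) hmB
    have hlt : a + m * e < B.sup id + e + 2 := by omega
    have hmem : a + m * e ∈ (List.range (B.sup id + e + 2)).filter (fun p => p % e == a) := by
      rw [List.mem_filter, List.mem_range]
      refine ⟨hlt, ?_⟩
      simp [Nat.add_mul_mod_self_right, Nat.mod_eq_of_lt hae]
    rw [hN] at hmem
    obtain ⟨m', hm', heq⟩ := List.mem_map.1 hmem
    have : m' = m := by
      have := Nat.eq_of_mul_eq_mul_right he (by omega : m' * e = m * e)
      omega
    exact this ▸ List.mem_range.1 hm'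

lemma epsVal_stab (S1 S2 : Finset ℕ) (M N : ℕ)
    (h : ∀ m, M ≤ m → m ∉ S1 ∧ m ∉ S2) (hMN : M ≤ N) :
    epsVal S1 S2 N = epsVal S1 S2 M := by
  obtain ⟨k, rfl⟩ := Nat.exists_eq_add_of_le hMN
  clear hMN
  unfold epsVal
  rw [List.range_add, List.map_append, List.foldl_append]
  congr 1
  rw [List.map_map]
  generalize (((List.range M).map fun m => (decide (m ∈ S2), decide (m ∈ S1))).foldl nstep (0,0)) = st
  induction k generalizing st with
  | zero => rfl
  | succ k ih =>
    rw [List.range_succ, List.map_append, List.foldl_append, ih]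
    have h1 := h (M + k) (by omega)
    simp [nstep, h1.1, h1.2]
  
end St10

namespace St10

lemma runnerCount_eq {e : ℕ} (B : Finset ℕ) (i : ℕ) :
    runnerCount e B i = (rows e B i).card := by
  unfold runnerCount rows
  rw [Finset.card_image_of_injOn]
  intro p hp q hq hpq
  simp only [Finset.mem_filter, Finset.mem_coe] at hp hq
  have h1 := Nat.div_add_mod p e
  have h2 := Nat.div_add_mod q e
  rw [show p / e = q / e from hpq] at h1
  omega

lemma beadWeight_eq {e : ℕ} (B : Finset ℕ) (i p : ℕ) (hi : i < e) (hp : p % e = i) :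
    beadWeight e B p = rdef (rows e B i) (p / e) := by
  unfold beadWeight rdef
  apply Finset.card_bij' (fun q _ => q / e) (fun m _ => i + m * e)
  · intro q hq
    simp only [Finset.mem_filter, Finset.mem_range] at hq ⊢
    obtain ⟨hq1, hq2, hq3⟩ := hq
    have h1 := Nat.div_add_mod q e
    have h2 := Nat.div_add_mod p e
    constructor
    · -- q / e < p / e
      by_contra hc
      push_neg at hc
      have : e * (p / e) ≤ e * (q / e) := Nat.mul_le_mul_left e hc
      omega
    · rw [mem_rows B hi]
      have : i + q / e * e = q := by
        have h3 : e * (q / e) = (q / e) * e := mul_comm _ _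
        omega
      rwa [this]
  · intro m hm
    simp only [Finset.mem_filter, Finset.mem_range] at hm ⊢
    obtain ⟨hm1, hm2⟩ := hm
    have h2 := Nat.div_add_mod p e
    refine ⟨?_, ?_, ?_⟩
    · have : m * e + e ≤ (p / e) * e := by
        calc m * e + e = (m + 1) * e := by ring
        _ ≤ (p / e) * e := Nat.mul_le_mul_right e hm1
      have h3 : e * (p / e) = (p / e) * e := mul_comm _ _
      omega
    · rw [Nat.add_mul_mod_self_right, Nat.mod_eq_of_lt hi, hp]
    · rw [← mem_rows B hi]
      exact hm2
  · intro q hq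
    simp only [Finset.mem_filter, Finset.mem_range] at hq
    obtain ⟨hq1, hq2, hq3⟩ := hq
    have h1 := Nat.div_add_mod q e
    have h3 : e * (q / e) = (q / e) * e := mul_comm _ _
    omega
  · intro m hm
    simp only [Finset.mem_filter, Finset.mem_range] at hm
    rw [Nat.add_mul_div_right _ _ (by omega : 0 < e), Nat.div_eq_of_lt hi, Nat.zero_add]

lemma weight_decomp {e : ℕ} (B : Finset ℕ) (he : 0 < e) :
    abacusWeight e B = (Finset.range e).sum (fun i => rwt (rows e B i)) := by
  unfold abacusWeight
  rw [← Finset.sum_fiberwise_of_maps_to (g := fun p => p % e)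
      (fun p _ => Finset.mem_range.2 (Nat.mod_lt p he))]
  apply Finset.sum_congr rfl
  intro i hi
  have hie : i < e := Finset.mem_range.1 hi
  unfold rwt rows
  rw [Finset.sum_image]
  · apply Finset.sum_congr rfl
    intro p hp
    simp only [Finset.mem_filter] at hp
    rw [beadWeight_eq B i p hie hp.2]
    rfl
  · intro p hp q hq hpq
    simp only [Finset.mem_coe, Finset.mem_filter] at hp hq
    have h1 := Nat.div_add_mod p e
    have h2 := Nat.div_add_mod q e
    rw [show p / e = q / e from hpq] at h1
    omega

end St10

namespace St10

lemma rdef_le_rwt {S : Finset ℕ} {s : ℕ} (hs : s ∈ S) : rdef S s ≤ rwt S :=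
  Finset.single_le_sum (fun _ _ => Nat.zero_le _) hs

lemma subset_range_of_rwt {S : Finset ℕ} {n w : ℕ} (hc : S.card = n) (hw : rwt S ≤ w) :
    S ⊆ Finset.range (n + w) := by
  intro s hs
  rw [Finset.mem_range]
  by_contra hc2
  push_neg at hc2
  have h1 : rdef S s ≤ w := le_trans (rdef_le_rwt hs) hw
  have h2 : ((Finset.range s).filter (fun q => q ∈ S)).card ≤ n - 1 := by
    have hsub : (Finset.range s).filter (fun q => q ∈ S) ⊆ S.erase s := by
      intro q hq
      simp only [Finset.mem_filter, Finset.mem_range] at hq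
      exact Finset.mem_erase.2 ⟨by omega, hq.2⟩
    calc _ ≤ (S.erase s).card := Finset.card_le_card hsub
    _ = n - 1 := by rw [Finset.card_erase_of_mem hs, hc]
  have hcc : (Finset.filter (Membership.mem S) (Finset.range s)).card ≤ n - 1 := h2
  have hn : 1 ≤ n := by rw [← hc]; exact Finset.card_pos.2 ⟨s, hs⟩
  unfold rdef at h1
  rw [Finset.filter_not, Finset.card_sdiff_of_subset (Finset.filter_subset _ _), Finset.card_range] at h1
  omega

lemma eq_range_of_rwt_zero {S : Finset ℕ} {n : ℕ} (hc : S.card = n) (hw : rwt S = 0) :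
    S = Finset.range n := by
  have hdc : ∀ s ∈ S, ∀ q, q < s → q ∈ S := by
    intro s hs q hq
    have h1 : rdef S s = 0 := Nat.le_zero.1 (hw ▸ rdef_le_rwt hs)
    unfold rdef at h1
    rw [Finset.card_eq_zero, Finset.filter_eq_empty_iff] at h1
    by_contra hqS
    exact (h1 (Finset.mem_range.2 hq)) hqS
  have hsub : S ⊆ Finset.range n := by
    intro s hs
    rw [Finset.mem_range]
    have : Finset.range (s + 1) ⊆ S := by
      intro q hq
      rw [Finset.mem_range] at hq
      rcases Nat.lt_succ_iff_lt_or_eq.1 hq with h | h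
      · exact hdc s hs q h
      · exact h ▸ hs
    have := Finset.card_le_card this
    rw [Finset.card_range, hc] at this
    omega
  exact Finset.eq_of_subset_of_card_le hsub (by rw [Finset.card_range, hc])

lemma sum_eq_one_nat {s : Finset ℕ} {f : ℕ → ℕ} (h : s.sum f = 1) :
    ∃ i ∈ s, f i = 1 ∧ ∀ j ∈ s, j ≠ i → f j = 0 := by
  have : ∃ i ∈ s, f i ≠ 0 := by
    by_contra hc
    push_neg at hc
    rw [Finset.sum_eq_zero hc] at h
    omega
  obtain ⟨i, hi, hfi⟩ := this
  have h1 : f i ≤ 1 := h ▸ Finset.single_le_sum (fun _ _ => Nat.zero_le _) hi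
  have hfi1 : f i = 1 := by omega
  refine ⟨i, hi, hfi1, ?_⟩
  have h2 : f i + (s.erase i).sum f = 1 := by
    rw [Finset.add_sum_erase s f hi]; exact h
  have h2 : (s.erase i).sum f = 0 := by omega
  intro j hj hji
  exact (Finset.sum_eq_zero_iff).1 h2 j (Finset.mem_erase.2 ⟨hji, hj⟩)

lemma dec_unique {e i j m x : ℕ} (hi : i < e) (hj : j < e) (h : i + m * e = j + x * e) :
    i = j ∧ m = x := by
  have h1 : (i + m * e) % e = i := by
    rw [Nat.add_mul_mod_self_right, Nat.mod_eq_of_lt hi]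
  have h2 : (j + x * e) % e = j := by
    rw [Nat.add_mul_mod_self_right, Nat.mod_eq_of_lt hj]
  have hij : i = j := by rw [← h1, ← h2, h]
  refine ⟨hij, ?_⟩
  subst hij
  have : m * e = x * e := by omega
  have he : 0 < e := by omega
  exact Nat.eq_of_mul_eq_mul_right he this

lemma rows_display {e : ℕ} (bd : ℕ → ℕ) (lamOf : ℕ → List ℕ) {i : ℕ} (hi : i < e) :
    rows e (display e bd lamOf) i = oneRunnerBeta (lamOf i) (bd i) := by
  ext m
  rw [mem_rows _ hi]
  unfold display
  rw [Finset.mem_biUnion]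
  constructor
  · rintro ⟨j, hj, hmem⟩
    rw [Finset.mem_image] at hmem
    obtain ⟨x, hx, heq⟩ := hmem
    obtain ⟨hij, hmx⟩ := dec_unique hi (Finset.mem_range.1 hj) heq.symm
    rwa [← hij, ← hmx] at hx
  · intro hm
    exact ⟨i, Finset.mem_range.2 hi, Finset.mem_image.2 ⟨m, hm, rfl⟩⟩

lemma B_eq_display {e : ℕ} (B : Finset ℕ) (he : 0 < e) (bd : ℕ → ℕ) (lamOf : ℕ → List ℕ)
    (h : ∀ i < e, rows e B i = oneRunnerBeta (lamOf i) (bd i)) :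
    B = display e bd lamOf := by
  ext p
  unfold display
  rw [Finset.mem_biUnion]
  constructor
  · intro hp
    refine ⟨p % e, Finset.mem_range.2 (Nat.mod_lt p he), ?_⟩
    rw [← h _ (Nat.mod_lt p he), Finset.mem_image]
    refine ⟨p / e, ?_, ?_⟩
    · rw [mem_rows _ (Nat.mod_lt p he)]
      have h1 := Nat.div_add_mod p e
      have h2 : e * (p / e) = (p / e) * e := mul_comm _ _
      have : p % e + p / e * e = p := by omega
      rwa [this]
    · have h1 := Nat.div_add_mod p e
      have h2 : e * (p / e) = (p / e) * e := mul_comm _ _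
      omega
  · rintro ⟨i, hi, hmem⟩
    rw [Finset.mem_image] at hmem
    obtain ⟨x, hx, rfl⟩ := hmem
    rw [← h _ (Finset.mem_range.1 hi)] at hx
    exact (mem_rows _ (Finset.mem_range.1 hi) _).1 hx

lemma oneRunnerBeta_nil (n : ℕ) : oneRunnerBeta [] n = Finset.range n := by
  ext x
  unfold oneRunnerBeta
  simp only [Finset.mem_image, Finset.mem_range]
  constructor
  · rintro ⟨t, ht, rfl⟩
    rw [List.getD_nil]
    omega
  · intro hx
    refine ⟨n - 1 - x, by omega, ?_⟩
    rw [List.getD_nil]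
    omega

lemma oneRunnerBeta_one {n : ℕ} (hn : 1 ≤ n) :
    oneRunnerBeta [1] n = insert n (Finset.range (n - 1)) := by
  ext x
  unfold oneRunnerBeta
  simp only [Finset.mem_image, Finset.mem_range, Finset.mem_insert]
  constructor
  · rintro ⟨t, ht, rfl⟩
    cases t with
    | zero =>
      left
      show [1].getD 0 0 + (n - 1 - 0) = n
      rw [show [1].getD 0 0 = 1 from rfl]
      omega
    | succ t =>
      right
      rw [show [1].getD (t + 1) 0 = 0 from rfl]
      omega
  · rintro (rfl | hx)
    · refine ⟨0, by omega, ?_⟩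
      rw [show [1].getD 0 0 = 1 from rfl]
      omega
    · refine ⟨n - 1 - x, by omega, ?_⟩
      have ht : n - 1 - x ≠ 0 := by omega
      cases hnn : n - 1 - x with
      | zero => omega
      | succ t =>
        rw [show [1].getD (t + 1) 0 = 0 from rfl]
        omega

end St10

namespace St10
set_option maxRecDepth 400000

def L1 : List (Finset ℕ) :=
  [{3,2,1,0}, {4,2,1,0}, {5,2,1,0}, {4,3,1,0}, {6,2,1,0}, {5,3,1,0},
   {4,3,2,0}, {7,2,1,0}, {6,3,1,0}, {5,4,1,0}, {5,3,2,0}, {4,3,2,1}]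

def L2 : List (Finset ℕ) :=
  [{5,4,3,2,1,0}, {6,4,3,2,1,0}, {7,4,3,2,1,0}, {6,5,3,2,1,0}, {8,4,3,2,1,0},
   {7,5,3,2,1,0}, {6,5,4,2,1,0}, {9,4,3,2,1,0}, {8,5,3,2,1,0}, {7,6,3,2,1,0},
   {7,5,4,2,1,0}, {6,5,4,3,1,0}]

lemma CL1 : ∀ S1 ∈ (Finset.range 8).powerset, S1.card = 4 → rwt S1 ≤ 4 → S1 ∈ L1 := by
  decide

lemma CL2' : ∀ S' ∈ (Finset.range 8).powerset, S'.card = 4 →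
    rwt (Finset.range 2 ∪ S'.image (· + 2)) ≤ 4 →
    (Finset.range 2 ∪ S'.image (· + 2)) ∈ L2 := by decide

lemma CL3 : ∀ S1 ∈ L1, ∀ S2 ∈ L2, rwt S1 + rwt S2 ≤ 4 →
    (3 ≤ epsVal S1 S2 10 ↔ (S1 = Finset.range 4 ∧
      (S2 = ({0,1,2,4,5,7} : Finset ℕ) ∨ S2 = ({0,1,2,4,5,6} : Finset ℕ) ∨
        S2 = ({0,1,3,4,5,6} : Finset ℕ)))) := by decide

/-- beads strictly above a gap each contribute weight. -/
lemma card_le_rwt_add {S : Finset ℕ} {t : ℕ} (ht : t ∉ S) : S.card ≤ rwt S + t := by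
  have h1 : (S.filter (fun s => t < s)).card ≤ rwt S := by
    calc (S.filter (fun s => t < s)).card
        = (S.filter (fun s => t < s)).sum (fun _ => 1) := by
          rw [Finset.sum_const, smul_eq_mul, mul_one]
      _ ≤ (S.filter (fun s => t < s)).sum (rdef S) := by
          apply Finset.sum_le_sum
          intro s hs
          simp only [Finset.mem_filter] at hs
          have : t ∈ (Finset.range s).filter (fun q => q ∉ S) := by
            simp only [Finset.mem_filter, Finset.mem_range]
            exact ⟨hs.2, ht⟩
          have := Finset.card_pos.2 ⟨t, this⟩
          unfold rdef
          omega
      _ ≤ rwt S := Finset.sum_le_sum_of_subset (Finset.filter_subset _ _)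
  have h2 : (S.filter (fun s => ¬ t < s)).card ≤ t := by
    have hsub : S.filter (fun s => ¬ t < s) ⊆ (Finset.range (t + 1)).erase t := by
      intro s hs
      simp only [Finset.mem_filter, not_lt] at hs
      rw [Finset.mem_erase, Finset.mem_range]
      refine ⟨?_, by omega⟩
      intro h
      exact ht (h ▸ hs.1)
    calc _ ≤ ((Finset.range (t + 1)).erase t).card := Finset.card_le_card hsub
      _ = t := by
          rw [Finset.card_erase_of_mem (Finset.mem_range.2 (by omega)), Finset.card_range]
          omega
  have h3 := Finset.card_filter_add_card_filter_not
    (s := S) (p := fun s => t < s)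
  omega

lemma range2_subset {S : Finset ℕ} (hc : S.card = 6) (hw : rwt S ≤ 4) :
    Finset.range 2 ⊆ S := by
  intro t ht
  rw [Finset.mem_range] at ht
  by_contra htS
  have := card_le_rwt_add htS
  omega

lemma decomp_S2 {S : Finset ℕ} (hsub : S ⊆ Finset.range 10) (h2 : Finset.range 2 ⊆ S)
    (hc : S.card = 6) :
    ∃ S' ∈ (Finset.range 8).powerset, S'.card = 4 ∧
      S = Finset.range 2 ∪ S'.image (· + 2) := by
  refine ⟨(S.filter (fun x => 2 ≤ x)).image (· - 2), ?_, ?_, ?_⟩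
  · rw [Finset.mem_powerset]
    intro x hx
    rw [Finset.mem_image] at hx
    obtain ⟨y, hy, rfl⟩ := hx
    simp only [Finset.mem_filter] at hy
    have := Finset.mem_range.1 (hsub hy.1)
    rw [Finset.mem_range]
    omega
  · -- card
    have hinj : Set.InjOn (· - 2) (S.filter (fun x => 2 ≤ x)) := by
      intro x hx y hy hxy
      simp only [Finset.mem_coe, Finset.mem_filter] at hx hy
      simp only at hxy
      omega
    rw [Finset.card_image_of_injOn hinj]
    have h3 := Finset.card_filter_add_card_filter_not
      (s := S) (p := fun x => 2 ≤ x)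
    have h4 : S.filter (fun x => ¬ 2 ≤ x) = Finset.range 2 := by
      apply Finset.eq_of_subset_of_card_le
      · intro x hx
        simp only [Finset.mem_filter, not_le] at hx
        exact Finset.mem_range.2 hx.2
      · apply Finset.card_le_card_of_injOn id
        · intro x hx
          simp only [Finset.mem_coe, id, Finset.mem_filter, not_le] at hx ⊢
          exact ⟨h2 hx, Finset.mem_range.1 hx⟩
        · intro x _ y _ h; exact h
    rw [h4, Finset.card_range] at h3
    omega
  · -- S = range 2 ∪ image
    ext z
    rw [Finset.mem_union, Finset.mem_range, Finset.mem_image]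
    constructor
    · intro hz
      by_cases hz2 : z < 2
      · exact Or.inl hz2
      · refine Or.inr ⟨z - 2, ?_, by omega⟩
        rw [Finset.mem_image]
        exact ⟨z, Finset.mem_filter.2 ⟨hz, by omega⟩, rfl⟩
    · rintro (hz | ⟨x, hx, rfl⟩)
      · exact h2 (Finset.mem_range.2 hz)
      · rw [Finset.mem_image] at hx
        obtain ⟨y, hy, rfl⟩ := hx
        simp only [Finset.mem_filter] at hy
        have : y - 2 + 2 = y := by omega
        rw [this]
        exact hy.1

end St10

namespace St10
set_option maxRecDepth 400000

lemma ORB211 : oneRunnerBeta [2,1,1] 6 = ({0,1,2,4,5,7} : Finset ℕ) := by decide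
lemma ORB111 : oneRunnerBeta [1,1,1] 6 = ({0,1,2,4,5,6} : Finset ℕ) := by decide
lemma ORB1111 : oneRunnerBeta [1,1,1,1] 6 = ({0,1,3,4,5,6} : Finset ℕ) := by decide

lemma rwt_vals : rwt (Finset.range 4) = 0 ∧ rwt ({0,1,2,4,5,7} : Finset ℕ) = 4 ∧
    rwt ({0,1,2,4,5,6} : Finset ℕ) = 3 ∧ rwt ({0,1,3,4,5,6} : Finset ℕ) = 4 := by decide

lemma eps_vals : epsVal (Finset.range 4) ({0,1,2,4,5,7} : Finset ℕ) 10 = 3 ∧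
    epsVal (Finset.range 4) ({0,1,2,4,5,6} : Finset ℕ) 10 = 3 ∧
    epsVal (Finset.range 4) ({0,1,3,4,5,6} : Finset ℕ) 10 = 3 := by decide

lemma rwt_one_456 {S : Finset ℕ} {n : ℕ} (hn : n = 4 ∨ n = 5 ∨ n = 6)
    (hc : S.card = n) (hw : rwt S = 1) : S = insert n (Finset.range (n - 1)) := by
  have hsub : S ⊆ Finset.range (n + 1) := subset_range_of_rwt hc (by omega)
  have hd4 : ∀ S ∈ (Finset.range 5).powerset, S.card = 4 → rwt S = 1 →
      S = insert 4 (Finset.range 3) := by decide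
  have hd5 : ∀ S ∈ (Finset.range 6).powerset, S.card = 5 → rwt S = 1 →
      S = insert 5 (Finset.range 4) := by decide
  have hd6 : ∀ S ∈ (Finset.range 7).powerset, S.card = 6 → rwt S = 1 →
      S = insert 6 (Finset.range 5) := by decide
  rcases hn with rfl | rfl | rfl
  · exact hd4 S (Finset.mem_powerset.2 hsub) hc hw
  · exact hd5 S (Finset.mem_powerset.2 hsub) hc hw
  · exact hd6 S (Finset.mem_powerset.2 hsub) hc hw

lemma eps_bridge {e a : ℕ} (B : Finset ℕ) (ha : 0 < a) (hae : a < e)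
    (h1 : rows e B (a-1) ⊆ Finset.range 10) (h2 : rows e B a ⊆ Finset.range 10) :
    epsB e B a = epsVal (rows e B (a-1)) (rows e B a) 10 := by
  obtain ⟨N, hN, hb1, hb2⟩ := epsB_eq e a B ha hae
  rw [hN]
  have key : ∀ m, min N 10 ≤ m → m ∉ rows e B (a-1) ∧ m ∉ rows e B a := by
    intro m hm
    constructor
    · intro hmem
      have := hb1 m hmem
      have := Finset.mem_range.1 (h1 hmem)
      omega
    · intro hmem
      have := hb2 m hmem
      have := Finset.mem_range.1 (h2 hmem)
      omega
  rw [epsVal_stab _ _ (min N 10) N key (min_le_left _ _),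
    ← epsVal_stab _ _ (min N 10) 10 key (min_le_right _ _)]

end St10

open St10 in
/-- exceptional partitions for the `[4:2]`-pair formed by the block
`⟨4^a, 6^{b−a}, 5^{c−b}, 4^{e−c}⟩` via the residue carried by runner `a`. -/
theorem stmt10 (e a b c : ℕ) (he : 2 ≤ e) (ha : 0 < a) (hab : a < b) (hbc : b ≤ c)
    (hce : c ≤ e) (bd : ℕ → ℕ)
    (hbd : bd = fun i => if i < a then 4 else if i < b then 6 else if i < c then 5 else 4)
    (r : ℕ) (hr : r = (Finset.range e).sum bd)
    (lam : AbacusPartition) (hlam : inBlock e bd 4 lam)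
    (B : Finset ℕ) (hB : B = lam.betaSet r) :
    3 ≤ epsB e B a ↔
      (B = display e bd (fun m => if m = a then [2, 1, 1] else []) ∨
       (∃ i, i < e ∧ i ≠ a - 1 ∧ i ≠ a ∧
         B = display e bd (fun m => if m = a then [1, 1, 1] else if m = i then [1] else [])) ∨
       B = display e bd (fun m => if m = a then [1, 1, 1, 1] else [])) := by
  have he0 : 0 < e := by omega
  have hae : a < e := by omega
  obtain ⟨hlen, hcnt, hwt⟩ := hlam
  rw [← hr, ← hB] at hcnt hwt
  have hbda : bd a = 6 := by rw [hbd]; simp only [lt_irrefl, if_false, if_pos hab]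
  have hbda1 : bd (a-1) = 4 := by
    rw [hbd]; simp only [if_pos (show a - 1 < a by omega)]
  have hbdran : ∀ i, bd i = 4 ∨ bd i = 5 ∨ bd i = 6 := by
    intro i; rw [hbd]; dsimp only; split_ifs <;> simp
  have hcardS : ∀ i, i < e → (rows e B i).card = bd i := by
    intro i hi
    rw [← runnerCount_eq]
    exact hcnt i hi
  have hwt' : (Finset.range e).sum (fun i => rwt (rows e B i)) = 4 := by
    rw [← weight_decomp B he0]; exact hwt
  have hne : a - 1 ≠ a := by omega
  have hpairsub : ({a-1, a} : Finset ℕ) ⊆ Finset.range e := by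
    intro x hx
    rw [Finset.mem_insert, Finset.mem_singleton] at hx
    rcases hx with rfl | rfl <;> (rw [Finset.mem_range]; omega)
  have hsd0 := Finset.sum_sdiff (f := fun i => rwt (rows e B i)) hpairsub
  rw [hwt', Finset.sum_pair hne] at hsd0
  have hsd : (Finset.range e \ {a-1, a}).sum (fun i => rwt (rows e B i)) +
      (rwt (rows e B (a-1)) + rwt (rows e B a)) = 4 := hsd0
  have hcard1 : (rows e B (a-1)).card = 4 := by rw [hcardS (a-1) (by omega), hbda1]
  have hcard2 : (rows e B a).card = 6 := by rw [hcardS a hae, hbda]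
  have hw1 : rwt (rows e B (a-1)) ≤ 4 := by omega
  have hw2 : rwt (rows e B a) ≤ 4 := by omega
  have hsub1 : rows e B (a-1) ⊆ Finset.range 8 := subset_range_of_rwt hcard1 hw1
  have hsub1' : rows e B (a-1) ⊆ Finset.range 10 :=
    hsub1.trans (Finset.range_subset_range.2 (by omega))
  have hsub2 : rows e B a ⊆ Finset.range 10 := subset_range_of_rwt hcard2 hw2
  have hbridge := eps_bridge B ha hae hsub1' hsub2
  obtain ⟨hv1, hv2, hv3, hv4⟩ := rwt_vals
  obtain ⟨he1, he2, he3⟩ := eps_vals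
  constructor
  · -- forward
    intro h
    rw [hbridge] at h
    have hS1L : rows e B (a-1) ∈ L1 := CL1 _ (Finset.mem_powerset.2 hsub1) hcard1 hw1
    have hS2L : rows e B a ∈ L2 := by
      obtain ⟨S', hS'p, hS'c, hS2eq⟩ := decomp_S2 hsub2 (range2_subset hcard2 hw2) hcard2
      rw [hS2eq]
      exact CL2' S' hS'p hS'c (by rw [← hS2eq]; exact hw2)
    obtain ⟨hS1eq, hS2cases⟩ := (CL3 _ hS1L _ hS2L (by omega)).mp h
    have hrw1 : rwt (rows e B (a-1)) = 0 := by rw [hS1eq]; exact hv1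
    rcases hS2cases with hS2eq | hS2eq | hS2eq
    · -- ⟨a_{(2,1,1)}⟩
      left
      have hrw2 : rwt (rows e B a) = 4 := by rw [hS2eq]; exact hv2
      have hzero : ∀ i ∈ Finset.range e \ {a-1, a}, rwt (rows e B i) = 0 := by
        apply Finset.sum_eq_zero_iff.1
        omega
      apply B_eq_display B he0
      intro i hi
      by_cases hia : i = a
      · subst hia
        rw [if_pos rfl, hbda, ORB211, hS2eq]
      · rw [if_neg hia, oneRunnerBeta_nil]
        by_cases hia1 : i = a - 1
        · subst hia1
          exact hS1eq.trans (by rw [hbda1])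
        · apply eq_range_of_rwt_zero (hcardS i hi)
          apply hzero
          rw [Finset.mem_sdiff, Finset.mem_range, Finset.mem_insert, Finset.mem_singleton]
          exact ⟨hi, by tauto⟩
    · -- ⟨a_{(1,1,1)}, i⟩
      right; left
      have hrw2 : rwt (rows e B a) = 3 := by rw [hS2eq]; exact hv3
      have hone : (Finset.range e \ {a-1, a}).sum (fun i => rwt (rows e B i)) = 1 := by
        omega
      obtain ⟨i0, hi0mem, hi0one, hi0rest⟩ := sum_eq_one_nat hone
      rw [Finset.mem_sdiff, Finset.mem_range, Finset.mem_insert, Finset.mem_singleton] at hi0mem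
      push_neg at hi0mem
      have hi0e := hi0mem.1
      have hi0a1 := hi0mem.2.1
      have hi0a := hi0mem.2.2
      refine ⟨i0, hi0e, hi0a1, hi0a, ?_⟩
      apply B_eq_display B he0
      intro i hi
      by_cases hia : i = a
      · subst hia
        rw [if_pos rfl, hbda, ORB111, hS2eq]
      · rw [if_neg hia]
        by_cases hii0 : i = i0
        · subst hii0
          rw [if_pos rfl]
          have hb1 : 1 ≤ bd i := by rcases hbdran i with h' | h' | h' <;> omega
          rw [oneRunnerBeta_one hb1]
          exact rwt_one_456 (hbdran i) (hcardS i hi) hi0one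
        · rw [if_neg hii0, oneRunnerBeta_nil]
          by_cases hia1 : i = a - 1
          · subst hia1
            exact hS1eq.trans (by rw [hbda1])
          · apply eq_range_of_rwt_zero (hcardS i hi)
            apply hi0rest i ?_ hii0
            rw [Finset.mem_sdiff, Finset.mem_range, Finset.mem_insert, Finset.mem_singleton]
            exact ⟨hi, by tauto⟩
    · -- ⟨a_{(1,1,1,1)}⟩
      right; right
      have hrw2 : rwt (rows e B a) = 4 := by rw [hS2eq]; exact hv4
      have hzero : ∀ i ∈ Finset.range e \ {a-1, a}, rwt (rows e B i) = 0 := by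
        apply Finset.sum_eq_zero_iff.1
        omega
      apply B_eq_display B he0
      intro i hi
      by_cases hia : i = a
      · subst hia
        rw [if_pos rfl, hbda, ORB1111, hS2eq]
      · rw [if_neg hia, oneRunnerBeta_nil]
        by_cases hia1 : i = a - 1
        · subst hia1
          exact hS1eq.trans (by rw [hbda1])
        · apply eq_range_of_rwt_zero (hcardS i hi)
          apply hzero
          rw [Finset.mem_sdiff, Finset.mem_range, Finset.mem_insert, Finset.mem_singleton]
          exact ⟨hi, by tauto⟩
  · -- backward
    intro h
    rw [hbridge]
    have ha1e : a - 1 < e := by omega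
    rcases h with hdisp | ⟨i0, hi0e, hi0a1, hi0a, hdisp⟩ | hdisp
    · have h1 : rows e B (a-1) = Finset.range 4 := by
        rw [hdisp, rows_display bd _ ha1e, if_neg hne, hbda1, oneRunnerBeta_nil]
      have h2 : rows e B a = ({0,1,2,4,5,7} : Finset ℕ) := by
        rw [hdisp, rows_display bd _ hae, if_pos rfl, hbda, ORB211]
      rw [h1, h2, he1]
    · have h1 : rows e B (a-1) = Finset.range 4 := by
        rw [hdisp, rows_display bd _ ha1e, if_neg hne, if_neg (Ne.symm hi0a1), hbda1,
          oneRunnerBeta_nil]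
      have h2 : rows e B a = ({0,1,2,4,5,6} : Finset ℕ) := by
        rw [hdisp, rows_display bd _ hae, if_pos rfl, hbda, ORB111]
      rw [h1, h2, he2]
    · have h1 : rows e B (a-1) = Finset.range 4 := by
        rw [hdisp, rows_display bd _ ha1e, if_neg hne, hbda1, oneRunnerBeta_nil]
      have h2 : rows e B a = ({0,1,3,4,5,6} : Finset ℕ) := by
        rw [hdisp, rows_display bd _ hae, if_pos rfl, hbda, ORB1111]
      rw [h1, h2, he3]
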